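/- Suppose n ∈ 3ℕ, k ∈ ℕ with 1 ≤ k < n/3. Then there exists a graph G on n vertices whose degree sequence d₁ ≤ … ≤ dₙ satisfies dᵢ = n/3 + k − 1 for 1 ≤ i ≤ k, dᵢ = 2n/3 for k+1 ≤ i ≤ n/3+k, dᵢ = n − k − 1 for n/3+k+1 ≤ i ≤ n−k+1, and dᵢ = n − 1 for n−k+2 ≤ i ≤ n, but such that G contains no perfect K₃-packing. -/

import Mathlib

open Finset

def ClsRel (a b : ℕ) : Prop :=
  a = 3 ∨ b = 3 ∨ (a = 0 ∧ b = 1) ∨ (a = 1 ∧ b = 0) ∨ (a = 1 ∧ b = 2) ∨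
    (a = 2 ∧ b = 1) ∨ (a = 2 ∧ b = 2)

instance : ∀ a b, Decidable (ClsRel a b) := fun a b => by unfold ClsRel; infer_instance

def cls (k m i : ℕ) : ℕ :=
  if i < k then 0 else if i < m + k then 1 else if i < 3 * m - k + 1 then 2 else 3

def G0 (k m : ℕ) : SimpleGraph (Fin (3 * m)) where
  Adj u v := u ≠ v ∧ ClsRel (cls k m u.val) (cls k m v.val)
  symm := by
    constructor
    rintro u v ⟨h1, h2⟩
    exact ⟨h1.symm, by unfold ClsRel at h2 ⊢; tauto⟩
  loopless := ⟨fun v h => h.1 rfl⟩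

lemma G0_adj {k m : ℕ} {u v : Fin (3 * m)} :
    (G0 k m).Adj u v ↔ u ≠ v ∧ ClsRel (cls k m u.val) (cls k m v.val) := Iff.rfl

instance (k m : ℕ) : DecidableRel (G0 k m).Adj := fun _ _ =>
  decidable_of_iff _ G0_adj.symm

lemma adj_mem_triple {V : Type*} [DecidableEq V] {G : SimpleGraph V} {a b c x y : V}
    (hab : G.Adj a b) (hac : G.Adj a c) (hbc : G.Adj b c)
    (hx : x ∈ ({a,b,c} : Finset V)) (hy : y ∈ ({a,b,c} : Finset V)) (hxy : x ≠ y) :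
    G.Adj x y := by
  simp only [Finset.mem_insert, Finset.mem_singleton] at hx hy
  rcases hx with rfl | rfl | rfl <;> rcases hy with rfl | rfl | rfl <;>
    first
      | exact absurd rfl hxy
      | assumption
      | exact hab.symm
      | exact hac.symm
      | exact hbc.symm

lemma cls_le3 (k m i : ℕ) : cls k m i ≤ 3 := by unfold cls; split_ifs <;> (try simp) <;> omega

lemma card_filter_fin (n : ℕ) (p : ℕ → Prop) [DecidablePred p] :
    (univ.filter fun i : Fin n => p i.val).card = ((range n).filter p).card := by
  apply Finset.card_bij (fun i _ => i.val)
  · intro a ha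
    simp only [mem_filter, mem_univ, true_and, mem_range] at ha ⊢
    exact ⟨a.isLt, ha⟩
  · intro a _ b _ h; exact Fin.val_injective h
  · intro b hb
    simp only [mem_filter, mem_range] at hb
    exact ⟨⟨b, hb.1⟩, by simp [hb.2], rfl⟩

lemma G0_erase (k m : ℕ) (v : Fin (3 * m)) :
    univ.filter (fun u => (G0 k m).Adj v u) =
      (univ.filter fun u : Fin (3 * m) => ClsRel (cls k m v.val) (cls k m u.val)).erase v := by
  ext u
  simp only [mem_filter, mem_univ, true_and, mem_erase, G0_adj]
  exact ⟨fun ⟨h1, h2⟩ => ⟨h1.symm, h2⟩, fun ⟨h1, h2⟩ => ⟨h1.symm, h2⟩⟩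

lemma G0_ncard (k m : ℕ) (v : Fin (3 * m)) :
    ((G0 k m).neighborSet v).ncard =
      ((univ.filter fun u : Fin (3 * m) => ClsRel (cls k m v.val) (cls k m u.val)).erase v).card := by
  rw [Set.ncard_eq_toFinset_card', ← SimpleGraph.neighborFinset_def,
    SimpleGraph.neighborFinset_eq_filter, G0_erase]

lemma G0_deg (k m : ℕ) (hk1 : 1 ≤ k) (hkm : k < m) (v : Fin (3 * m)) :
    ((G0 k m).neighborSet v).ncard =
      if (v : ℕ) < k then 3 * m / 3 + k - 1
      else if (v : ℕ) < 3 * m / 3 + k then 2 * (3 * m) / 3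
      else if (v : ℕ) < 3 * m - k + 1 then 3 * m - k - 1
      else 3 * m - 1 := by
  rw [G0_ncard]
  by_cases h0 : (v : ℕ) < k
  · have hc : cls k m v.val = 0 := by unfold cls; split_ifs <;> (try simp) <;> omega
    rw [if_pos h0, hc]
    have hnm : v ∉ univ.filter fun u : Fin (3 * m) => ClsRel 0 (cls k m u.val) := by
      simp [ClsRel, hc]
    rw [Finset.erase_eq_of_notMem hnm, card_filter_fin (3 * m) (fun i => ClsRel 0 (cls k m i))]
    have he : ((range (3 * m)).filter fun i => ClsRel 0 (cls k m i))
        = Ico k (m + k) ∪ Ico (3 * m - k + 1) (3 * m) := by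
      ext i
      simp only [mem_filter, mem_range, mem_union, mem_Ico, ClsRel, cls]
      split_ifs <;> (try simp) <;> omega
    rw [he, Finset.card_union_of_disjoint, Nat.card_Ico, Nat.card_Ico]
    · omega
    · rw [Finset.disjoint_left]
      intro x hx hx'
      simp only [mem_Ico] at hx hx'
      omega
  · by_cases h1 : (v : ℕ) < m + k
    · have hc : cls k m v.val = 1 := by unfold cls; split_ifs <;> (try simp) <;> omega
      rw [if_neg h0, if_pos (by omega : (v : ℕ) < 3 * m / 3 + k), hc]
      have hnm : v ∉ univ.filter fun u : Fin (3 * m) => ClsRel 1 (cls k m u.val) := by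
        simp [ClsRel, hc]
      rw [Finset.erase_eq_of_notMem hnm, card_filter_fin (3 * m) (fun i => ClsRel 1 (cls k m i))]
      have he : ((range (3 * m)).filter fun i => ClsRel 1 (cls k m i))
          = range k ∪ Ico (m + k) (3 * m) := by
        ext i
        simp only [mem_filter, mem_range, mem_union, mem_Ico, ClsRel, cls]
        split_ifs <;> (try simp) <;> omega
      rw [he, Finset.card_union_of_disjoint, Finset.card_range, Nat.card_Ico]
      · omega
      · rw [Finset.disjoint_left]
        intro x hx hx'
        simp only [mem_range, mem_Ico] at hx hx'
        omega
    · by_cases h2 : (v : ℕ) < 3 * m - k + 1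
      · have hc : cls k m v.val = 2 := by unfold cls; split_ifs <;> (try simp) <;> omega
        rw [if_neg h0, if_neg (by omega : ¬ ((v : ℕ) < 3 * m / 3 + k)), if_pos h2, hc]
        have hm : v ∈ univ.filter fun u : Fin (3 * m) => ClsRel 2 (cls k m u.val) := by
          simp [ClsRel, hc]
        rw [Finset.card_erase_of_mem hm, card_filter_fin (3 * m) (fun i => ClsRel 2 (cls k m i))]
        have he : ((range (3 * m)).filter fun i => ClsRel 2 (cls k m i)) = Ico k (3 * m) := by
          ext i
          simp only [mem_filter, mem_range, mem_Ico, ClsRel, cls]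
          split_ifs <;> (try simp) <;> omega
        rw [he, Nat.card_Ico]
      · have hc : cls k m v.val = 3 := by unfold cls; split_ifs <;> (try simp) <;> omega
        rw [if_neg h0, if_neg (by omega : ¬ ((v : ℕ) < 3 * m / 3 + k)), if_neg h2, hc]
        have hm : v ∈ univ.filter fun u : Fin (3 * m) => ClsRel 3 (cls k m u.val) := by
          simp [ClsRel, hc]
        rw [Finset.card_erase_of_mem hm, card_filter_fin (3 * m) (fun i => ClsRel 3 (cls k m i))]
        have he : ((range (3 * m)).filter fun i => ClsRel 3 (cls k m i)) = range (3 * m) := by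
          ext i
          simp only [mem_filter, mem_range, ClsRel, cls]
          split_ifs <;> (try simp) <;> omega
        rw [he, Finset.card_range]



/-- For `n ∈ 3ℕ` and `1 ≤ k < n/3` there is a graph on `n` vertices
with the prescribed degree sequence but no perfect `K₃`-packing. -/
theorem stmt3 (n k : ℕ) (hn3 : 3 ∣ n) (hk1 : 1 ≤ k) (hk : 3 * k < n) :
    ∃ G : SimpleGraph (Fin n), ∃ σ : Equiv.Perm (Fin n),
      (∀ i j : Fin n, i ≤ j →
        (G.neighborSet (σ i)).ncard ≤ (G.neighborSet (σ j)).ncard) ∧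
      (∀ i : Fin n, (G.neighborSet (σ i)).ncard =
        if (i : ℕ) < k then n / 3 + k - 1
        else if (i : ℕ) < n / 3 + k then 2 * n / 3
        else if (i : ℕ) < n - k + 1 then n - k - 1
        else n - 1) ∧
      ¬ ∃ T : Finset (Finset (Fin n)),
          (∀ t ∈ T, ∃ a b c : Fin n,
            G.Adj a b ∧ G.Adj a c ∧ G.Adj b c ∧ t = {a, b, c}) ∧
          (T : Set (Finset (Fin n))).PairwiseDisjoint id ∧
          T.card = n / 3 ∧
          (∀ v : Fin n, ∃ t ∈ T, v ∈ t) := by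
  obtain ⟨m, rfl⟩ := hn3
  have hkm : k < m := by omega
  refine ⟨G0 k m, Equiv.refl _, ?_, ?_, ?_⟩
  · intro i j hij
    have hij' : (i : ℕ) ≤ (j : ℕ) := hij
    simp only [Equiv.refl_apply]
    rw [G0_deg k m hk1 hkm i, G0_deg k m hk1 hkm j]
    split_ifs <;> (try simp) <;> omega
  · intro i
    simp only [Equiv.refl_apply]
    exact G0_deg k m hk1 hkm i
  · rintro ⟨T, hT, hdisj, hcard, hcover⟩
    set AB : Finset (Fin (3 * m)) := univ.filter (fun v => cls k m v.val ≤ 1) with hAB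
    set DD : Finset (Fin (3 * m)) := univ.filter (fun v => cls k m v.val = 3) with hDD
    have hABcard : AB.card = m + k := by
      rw [hAB, card_filter_fin (3 * m) (fun i => cls k m i ≤ 1)]
      have he : ((range (3 * m)).filter fun i => cls k m i ≤ 1) = range (m + k) := by
        ext i
        simp only [mem_filter, mem_range]; simp only [cls]
        split_ifs <;> (try simp) <;> omega
      rw [he, card_range]
    have hDDcard : DD.card = k - 1 := by
      rw [hDD, card_filter_fin (3 * m) (fun i => cls k m i = 3)]
      have he : ((range (3 * m)).filter fun i => cls k m i = 3) = Ico (3 * m - k + 1) (3 * m) := by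
        ext i
        simp only [mem_filter, mem_range, mem_Ico]; simp only [cls]
        split_ifs <;> (try simp) <;> omega
      rw [he, Nat.card_Ico]
      omega
    have htri : ∀ t ∈ T, (t ∩ AB).card ≤ 1 + (t ∩ DD).card := by
      intro t ht
      obtain ⟨a, b, c0, hab, hac, hbc, rfl⟩ := hT t ht
      by_cases hle : ({a, b, c0} ∩ AB).card ≤ 1
      · omega
      push_neg at hle
      obtain ⟨x, hx, y, hy, hxy⟩ := Finset.one_lt_card.mp hle
      have hxt : x ∈ ({a, b, c0} : Finset (Fin (3 * m))) := (Finset.mem_inter.mp hx).1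
      have hyt : y ∈ ({a, b, c0} : Finset (Fin (3 * m))) := (Finset.mem_inter.mp hy).1
      have hxAB : cls k m x.val ≤ 1 := by
        have := (Finset.mem_inter.mp hx).2
        rw [hAB, mem_filter] at this
        exact this.2
      have hyAB : cls k m y.val ≤ 1 := by
        have := (Finset.mem_inter.mp hy).2
        rw [hAB, mem_filter] at this
        exact this.2
      have hadjxy : (G0 k m).Adj x y := adj_mem_triple hab hac hbc hxt hyt hxy
      have hcard3 : ({a, b, c0} : Finset (Fin (3 * m))).card = 3 :=
        Finset.card_eq_three.mpr ⟨a, b, c0, hab.ne, hac.ne, hbc.ne, rfl⟩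
      have hsub : ({x, y} : Finset (Fin (3 * m))) ⊆ {a, b, c0} := by
        intro w hw
        rcases Finset.mem_insert.mp hw with rfl | hw
        · exact hxt
        · rw [Finset.mem_singleton.mp hw]; exact hyt
      have hxy2 : ({x, y} : Finset (Fin (3 * m))).card = 2 := Finset.card_pair hxy
      have hsd : (({a, b, c0} : Finset (Fin (3 * m))) \ {x, y}).card = 1 := by
        rw [Finset.card_sdiff_of_subset hsub, hcard3, hxy2]
      obtain ⟨z, hz⟩ := Finset.card_eq_one.mp hsd
      have hzmem : z ∈ ({a, b, c0} : Finset (Fin (3 * m))) \ {x, y} := by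
        rw [hz]; exact Finset.mem_singleton_self z
      have hzt : z ∈ ({a, b, c0} : Finset (Fin (3 * m))) := (Finset.mem_sdiff.mp hzmem).1
      have hzxy : z ∉ ({x, y} : Finset (Fin (3 * m))) := (Finset.mem_sdiff.mp hzmem).2
      have hzx : z ≠ x := fun h => hzxy (by rw [h]; exact Finset.mem_insert_self x {y})
      have hzy : z ≠ y := fun h => hzxy (by rw [h]; exact Finset.mem_insert_of_mem (Finset.mem_singleton_self y))
      have hadjzx := adj_mem_triple hab hac hbc hzt hxt hzx
      have hadjzy := adj_mem_triple hab hac hbc hzt hyt hzy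
      have hcz : cls k m z.val = 3 := by
        have r1 := hadjzx.2
        have r2 := hadjzy.2
        have r3 := hadjxy.2
        have l3 := cls_le3 k m z.val
        unfold ClsRel at r1 r2 r3
        omega
      have hzDD : z ∈ ({a, b, c0} : Finset (Fin (3 * m))) ∩ DD :=
        Finset.mem_inter.mpr ⟨hzt, by rw [hDD, mem_filter]; exact ⟨mem_univ z, hcz⟩⟩
      have hABsub : ({a, b, c0} : Finset (Fin (3 * m))) ∩ AB ⊆ {x, y} := by
        intro w hw
        by_contra hwmem
        simp only [Finset.mem_insert, Finset.mem_singleton, not_or] at hwmem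
        have hwz : w ∈ ({a, b, c0} : Finset (Fin (3 * m))) \ {x, y} := by
          refine Finset.mem_sdiff.mpr ⟨(Finset.mem_inter.mp hw).1, ?_⟩
          simp only [Finset.mem_insert, Finset.mem_singleton, not_or]
          exact hwmem
        rw [hz, Finset.mem_singleton] at hwz
        have hwAB : cls k m w.val ≤ 1 := by
          have := (Finset.mem_inter.mp hw).2
          rw [hAB, mem_filter] at this
          exact this.2
        rw [hwz, hcz] at hwAB
        omega
      have h2' : ({a, b, c0} ∩ AB).card ≤ 2 := by
        calc ({a, b, c0} ∩ AB).card ≤ ({x, y} : Finset (Fin (3 * m))).card :=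
              Finset.card_le_card hABsub
          _ = 2 := hxy2
      have h1' : 1 ≤ (({a, b, c0} : Finset (Fin (3 * m))) ∩ DD).card :=
        Finset.card_pos.mpr ⟨z, hzDD⟩
      omega
    have hTcard : T.card = m := by rw [hcard]; omega
    have hcover' : AB ⊆ T.biUnion (fun t => t ∩ AB) := by
      intro v hv
      obtain ⟨t, ht, hvt⟩ := hcover v
      exact Finset.mem_biUnion.mpr ⟨t, ht, Finset.mem_inter.mpr ⟨hvt, hv⟩⟩
    have h1 : m + k ≤ ∑ t ∈ T, (t ∩ AB).card := by
      calc m + k = AB.card := hABcard.symm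
        _ ≤ (T.biUnion fun t => t ∩ AB).card := Finset.card_le_card hcover'
        _ ≤ ∑ t ∈ T, (t ∩ AB).card := Finset.card_biUnion_le
    have h2 : ∑ t ∈ T, (t ∩ AB).card ≤ ∑ t ∈ T, (1 + (t ∩ DD).card) :=
      Finset.sum_le_sum htri
    have h3 : ∑ t ∈ T, (1 + (t ∩ DD).card) = T.card + ∑ t ∈ T, (t ∩ DD).card := by
      rw [Finset.sum_add_distrib, Finset.sum_const, smul_eq_mul, mul_one]
    have hdisj' : ∀ t1 ∈ T, ∀ t2 ∈ T, t1 ≠ t2 → Disjoint (t1 ∩ DD) (t2 ∩ DD) := by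
      intro t1 ht1 t2 ht2 hne
      exact Finset.disjoint_of_subset_left Finset.inter_subset_left
        (Finset.disjoint_of_subset_right Finset.inter_subset_left
          (hdisj (Finset.mem_coe.mpr ht1) (Finset.mem_coe.mpr ht2) hne))
    have h4 : ∑ t ∈ T, (t ∩ DD).card = (T.biUnion fun t => t ∩ DD).card :=
      (Finset.card_biUnion hdisj').symm
    have h5 : (T.biUnion fun t => t ∩ DD).card ≤ DD.card := by
      apply Finset.card_le_card
      intro v hv
      obtain ⟨t, _, hvt⟩ := Finset.mem_biUnion.mp hv
      exact (Finset.mem_inter.mp hvt).2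
    omega
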